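/- Let M ⊆ Q^n be an isotopically transitive MDS code with distance 2 containing 0, and let G be a group of autotopisms of M acting transitively on M such that for all τ, π ∈ G, τ(0) = π(0) implies τ_1 = π_1 (equal first-coordinate permutations). Then G acts regularly on M (in particular |G| = |M|), so M is topolinear. -/

import Mathlib

/-- If `M` is an isotopically transitive distance-2 MDS code containing `0` and `G` is a
transitive group of autotopisms of `M` in which the first-coordinate permutation of an
element is determined by the image of `0`, then `G` acts regularly on `M`
(so `M` is topolinear). -/
theorem transitive_autotopism_group_regular {Q : Type} [Fintype Q] [DecidableEq Q]
    (q0 : Q) {n : ℕ} (M : Set (Fin (n + 1) → Q))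
    (hcard : Nat.card M = Fintype.card Q ^ n)
    (hdist : ∀ x ∈ M, ∀ y ∈ M, x ≠ y → 2 ≤ hammingDist x y)
    (h0 : (fun _ => q0) ∈ M)
    (G : Subgroup (Fin (n + 1) → Equiv.Perm Q))
    (hpres : ∀ τ ∈ G, ∀ z, z ∈ M ↔ (fun i => τ i (z i)) ∈ M)
    (htrans : ∀ x ∈ M, ∀ y ∈ M, ∃ τ ∈ G, (fun i => τ i (x i)) = y)
    (hfirst : ∀ τ ∈ G, ∀ π ∈ G,
      (fun i => τ i q0) = (fun i => π i q0) → τ 0 = π 0) :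
    (∀ x ∈ M, ∀ y ∈ M,
      ∃! τ : G, (fun i => (τ : Fin (n + 1) → Equiv.Perm Q) i (x i)) = y) ∧
    Nat.card G = Nat.card M := by
  classical
  -- Two codewords agreeing outside one coordinate are equal.
  have hsame : ∀ x ∈ M, ∀ y ∈ M, ∀ i0 : Fin (n + 1),
      (∀ i, i ≠ i0 → x i = y i) → x = y := by
    intro x hx y hy i0 h
    by_contra hne
    have h2 := hdist x hx y hy hne
    have hle : hammingDist x y ≤ 1 := by
      have hsub : ({i | x i ≠ y i} : Finset (Fin (n + 1))) ⊆ {i0} := by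
        intro i hi
        simp only [Finset.mem_filter, Finset.mem_univ, true_and] at hi
        simp only [Finset.mem_singleton]
        by_contra hne'
        exact hi (h i hne')
      calc hammingDist x y ≤ ({i0} : Finset (Fin (n + 1))).card :=
            Finset.card_le_card hsub
        _ = 1 := Finset.card_singleton i0
    omega
  -- The projection forgetting coordinate 0 is surjective onto `Fin n → Q`.
  have hsurj : ∀ v : Fin n → Q, ∃ z ∈ M, ∀ j, z (Fin.succ j) = v j := by
    let f : M → (Fin n → Q) := fun z => z.1 ∘ Fin.succ
    have hinj : Function.Injective f := by
      intro z w hzw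
      apply Subtype.ext
      apply hsame z.1 z.2 w.1 w.2 0
      intro i hi
      obtain ⟨j, rfl⟩ := Fin.eq_succ_of_ne_zero hi
      exact congrFun hzw j
    have hc : Nat.card M = Nat.card (Fin n → Q) := by
      rw [hcard, Nat.card_eq_fintype_card]; simp
    have hbij : Function.Bijective f :=
      (Nat.bijective_iff_injective_and_card f).mpr ⟨hinj, hc⟩
    intro v
    obtain ⟨z, hz⟩ := hbij.2 v
    exact ⟨z.1, z.2, fun j => congrFun hz j⟩
  -- Any autotopism fixing the all-`q0` word is the identity.
  have hfix : ∀ σ ∈ G, (fun i => σ i q0) = (fun _ => q0) → σ = 1 := by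
    intro σ hσ h
    have σ0 : σ 0 = 1 := by
      have := hfirst σ hσ 1 G.one_mem (by simpa using h)
      simpa using this
    have hcoord : ∀ (j : Fin n) (a : Q), σ (Fin.succ j) a = a := by
      intro j a
      obtain ⟨z, hz, hzv⟩ := hsurj (Function.update (fun _ => q0) j a)
      have hw : (fun i => σ i (z i)) ∈ M := (hpres σ hσ z).mp hz
      have hwz : (fun i => σ i (z i)) = z := by
        apply hsame _ hw z hz (Fin.succ j)
        intro i hi
        rcases Fin.eq_zero_or_eq_succ i with rfl | ⟨k, rfl⟩
        · simp [σ0]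
        · have hkj : k ≠ j := fun hkj => hi (by rw [hkj])
          have hzk : z (Fin.succ k) = q0 := by
            rw [hzv k, Function.update_of_ne hkj]
          rw [hzk]
          exact congrFun h (Fin.succ k)
      have hza : z (Fin.succ j) = a := by
        rw [hzv j, Function.update_self]
      have := congrFun hwz (Fin.succ j)
      rwa [hza] at this
    funext i
    rcases Fin.eq_zero_or_eq_succ i with rfl | ⟨j, rfl⟩
    · simpa using σ0
    · exact Equiv.ext fun a => by simpa using hcoord j a
  -- Uniqueness of the autotopism mapping a given `x` to a given `y`.
  have huniq : ∀ x ∈ M, ∀ y ∈ M, ∀ τ ∈ G, ∀ π ∈ G,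
      (fun i => τ i (x i)) = y → (fun i => π i (x i)) = y → τ = π := by
    intro x hx y hy τ hτ π hπ hτx hπx
    obtain ⟨ρ, hρ, hρ0⟩ := htrans (fun _ => q0) h0 x hx
    set σ : Fin (n + 1) → Equiv.Perm Q := ρ⁻¹ * (π⁻¹ * τ) * ρ with hσdef
    have hσG : σ ∈ G := G.mul_mem (G.mul_mem (G.inv_mem hρ)
      (G.mul_mem (G.inv_mem hπ) hτ)) hρ
    have hσ0 : (fun i => σ i q0) = (fun _ => q0) := by
      funext i
      have h1 : ρ i q0 = x i := congrFun hρ0 i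
      have h2 : τ i (x i) = y i := congrFun hτx i
      have h3 : π i (x i) = y i := congrFun hπx i
      have h4 : (π i)⁻¹ (y i) = x i := by
        rw [← h3]; exact (π i).symm_apply_apply (x i)
      have h5 : (ρ i)⁻¹ (x i) = q0 := by
        rw [← h1]; exact (ρ i).symm_apply_apply q0
      simp only [hσdef, Pi.mul_apply, Pi.inv_apply, Equiv.Perm.mul_apply,
        Equiv.symm_apply_apply]
      rw [h1, h2, h4, h5]
    have hσ1 : σ = 1 := hfix σ hσG hσ0
    have : π⁻¹ * τ = 1 := by
      have := congrArg (fun s => ρ * s * ρ⁻¹) hσ1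
      simpa [hσdef, mul_assoc] using this
    calc τ = π * (π⁻¹ * τ) := by rw [← mul_assoc]; simp
      _ = π := by rw [this, mul_one]
  constructor
  · intro x hx y hy
    obtain ⟨τ, hτ, hτx⟩ := htrans x hx y hy
    refine ⟨⟨τ, hτ⟩, hτx, ?_⟩
    intro π hπx
    exact Subtype.ext (huniq x hx y hy π.1 π.2 τ hτ hπx hτx)
  · refine Nat.card_eq_of_bijective
      (fun τ => (⟨fun i => τ.1 i q0, (hpres τ.1 τ.2 _).mp h0⟩ : M)) ⟨?_, ?_⟩
    · intro τ π h
      have h' : (fun i => τ.1 i q0) = (fun i => π.1 i q0) :=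
        congrArg Subtype.val h
      exact Subtype.ext (huniq _ h0 _ ((hpres τ.1 τ.2 _).mp h0) τ.1 τ.2 π.1 π.2
        rfl h'.symm)
    · intro y
      obtain ⟨τ, hτ, hτ0⟩ := htrans (fun _ => q0) h0 y.1 y.2
      exact ⟨⟨τ, hτ⟩, Subtype.ext hτ0⟩
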